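/- (Transformation property of the geometric mean) For all symmetric positive definite n×n real matrices A and B and every invertible n×n real matrix M, M (A#B) Mᵀ = (M A Mᵀ) # (M B Mᵀ). -/

import Mathlib

open Matrix
open scoped Classical

/-- The unique symmetric positive semidefinite square root of a positive semidefinite
real matrix (junk value `0` for matrices that are not positive semidefinite). -/
noncomputable def msqrt {n : ℕ} (A : Matrix (Fin n) (Fin n) ℝ) :
    Matrix (Fin n) (Fin n) ℝ :=
  if h : A.PosSemidef then
    (h.1.eigenvectorUnitary : Matrix (Fin n) (Fin n) ℝ) *
      diagonal ((↑) ∘ (√·) ∘ h.1.eigenvalues) *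
      (star h.1.eigenvectorUnitary : Matrix (Fin n) (Fin n) ℝ)
  else 0

/-- The geometric mean `A # B = A^{1/2} (A^{-1/2} B A^{-1/2})^{1/2} A^{1/2}` of two
symmetric positive definite matrices `A` and `B` (here `A^{-1/2} = (A^{1/2})⁻¹`). -/
noncomputable def gmean {n : ℕ} (A B : Matrix (Fin n) (Fin n) ℝ) :
    Matrix (Fin n) (Fin n) ℝ :=
  msqrt A * msqrt ((msqrt A)⁻¹ * B * (msqrt A)⁻¹) * msqrt A

set_option maxHeartbeats 1000000
namespace GmeanAux
open scoped MatrixOrder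

variable {n : ℕ}

lemma msqrt_eq {A : Matrix (Fin n) (Fin n) ℝ} (h : A.PosSemidef) :
    msqrt A = CFC.sqrt A := by
  rw [CFC.sqrt_eq_real_sqrt A (Matrix.nonneg_iff_posSemidef.mpr h), cfcₙ_eq_cfc, h.1.cfc_eq,
    IsHermitian.cfc, Unitary.conjStarAlgAut_apply, msqrt, dif_pos h]; rfl

lemma msqrt_mul_self {A : Matrix (Fin n) (Fin n) ℝ} (h : A.PosSemidef) :
    msqrt A * msqrt A = A := by
  rw [msqrt_eq h]; exact CFC.sqrt_mul_sqrt_self A (Matrix.nonneg_iff_posSemidef.mpr h)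

lemma msqrt_posSemidef {A : Matrix (Fin n) (Fin n) ℝ} (h : A.PosSemidef) :
    (msqrt A).PosSemidef := by
  rw [msqrt_eq h]; exact Matrix.nonneg_iff_posSemidef.mp (CFC.sqrt_nonneg A)

lemma posDef_of_isUnit {S : Matrix (Fin n) (Fin n) ℝ}
    (hS : S.PosSemidef) (h : IsUnit S) : S.PosDef := by
  exact hS.posDef_iff_isUnit.mpr h

lemma msqrt_posDef {A : Matrix (Fin n) (Fin n) ℝ} (h : A.PosDef) :
    (msqrt A).PosDef := by
  refine posDef_of_isUnit (msqrt_posSemidef h.posSemidef) ?_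
  have hd : IsUnit ((msqrt A).det * (msqrt A).det) := by
    rw [← det_mul, msqrt_mul_self h.posSemidef]
    exact h.det_pos.ne'.isUnit
  exact (isUnit_iff_isUnit_det _).mpr (isUnit_of_mul_isUnit_left hd)

lemma posDef_conj {A M : Matrix (Fin n) (Fin n) ℝ} (hA : A.PosDef) (hM : IsUnit M) :
    (M * A * Mᴴ).PosDef := by
  refine posDef_of_isUnit (hA.posSemidef.mul_mul_conjTranspose_same M) ?_
  exact (hM.mul hA.isUnit).mul ((Matrix.isUnit_conjTranspose M).mpr hM)

lemma conjT_eq_transpose (M : Matrix (Fin n) (Fin n) ℝ) : Mᴴ = Mᵀ :=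
  conjTranspose_eq_transpose_of_trivial M

lemma posDef_conj' {A M : Matrix (Fin n) (Fin n) ℝ} (hA : A.PosDef) (hM : IsUnit M) :
    (M * A * Mᵀ).PosDef := by
  rw [← conjT_eq_transpose]; exact posDef_conj hA hM

lemma herm_eq {S : Matrix (Fin n) (Fin n) ℝ} (h : S.IsHermitian) : Sᵀ = S := by
  rw [← conjT_eq_transpose]; exact h

/-- The cross matrix `A^{-1/2} B A^{-1/2}` is positive definite. -/
lemma cross_posDef {A B : Matrix (Fin n) (Fin n) ℝ} (hA : A.PosDef) (hB : B.PosDef) :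
    ((msqrt A)⁻¹ * B * (msqrt A)⁻¹).PosDef := by
  have hS := msqrt_posDef hA
  have h2 : ((msqrt A)⁻¹)ᴴ = (msqrt A)⁻¹ := hS.inv.isHermitian
  have h3 := posDef_conj hB (isUnit_nonsing_inv_iff.mpr hS.isUnit)
  rwa [h2] at h3

lemma gmean_posDef {A B : Matrix (Fin n) (Fin n) ℝ} (hA : A.PosDef) (hB : B.PosDef) :
    (gmean A B).PosDef := by
  have hS := msqrt_posDef hA
  have hT := msqrt_posDef (cross_posDef hA hB)
  have : gmean A B = msqrt A * msqrt ((msqrt A)⁻¹ * B * (msqrt A)⁻¹) * (msqrt A)ᴴ := by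
    rw [hS.isHermitian.eq]; rfl
  rw [this]
  exact posDef_conj hT hS.isUnit

lemma gmean_solves {A B : Matrix (Fin n) (Fin n) ℝ} (hA : A.PosDef) (hB : B.PosDef) :
    gmean A B * A⁻¹ * gmean A B = B := by
  have hS := msqrt_posDef hA
  have hSu := hS.isUnit
  have hSS : msqrt A * msqrt A = A := msqrt_mul_self hA.posSemidef
  have hTT : msqrt ((msqrt A)⁻¹ * B * (msqrt A)⁻¹) * msqrt ((msqrt A)⁻¹ * B * (msqrt A)⁻¹)
      = (msqrt A)⁻¹ * B * (msqrt A)⁻¹ := msqrt_mul_self (cross_posDef hA hB).posSemidef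
  set S := msqrt A
  set T := msqrt (S⁻¹ * B * S⁻¹)
  have hAinv : A⁻¹ = S⁻¹ * S⁻¹ := by rw [← hSS, Matrix.mul_inv_rev]
  have hcan : S * S⁻¹ = 1 := mul_nonsing_inv _ ((isUnit_iff_isUnit_det _).mp hSu)
  have hcan' : S⁻¹ * S = 1 := nonsing_inv_mul _ ((isUnit_iff_isUnit_det _).mp hSu)
  show S * T * S * A⁻¹ * (S * T * S) = B
  calc S * T * S * A⁻¹ * (S * T * S)
      = S * T * (S * S⁻¹) * S⁻¹ * S * T * S := by rw [hAinv]; simp only [Matrix.mul_assoc]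
    _ = S * (T * T) * S := by rw [hcan, mul_one]; rw [show S * T * S⁻¹ * S * T * S = S * T * (S⁻¹ * S) * T * S by simp only [Matrix.mul_assoc], hcan', mul_one]; simp only [Matrix.mul_assoc]
    _ = S * (S⁻¹ * B * S⁻¹) * S := by rw [hTT]
    _ = (S * S⁻¹) * B * (S⁻¹ * S) := by simp only [Matrix.mul_assoc]
    _ = B := by rw [hcan, hcan', one_mul, mul_one]

lemma gmean_unique {A B X : Matrix (Fin n) (Fin n) ℝ} (hA : A.PosDef) (_hB : B.PosDef)
    (hX : X.PosDef) (hXB : X * A⁻¹ * X = B) : X = gmean A B := by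
  have hS := msqrt_posDef hA
  have hSu := hS.isUnit
  have hSS : msqrt A * msqrt A = A := msqrt_mul_self hA.posSemidef
  set S := msqrt A with hSdef
  have hSinvH : (S⁻¹)ᴴ = S⁻¹ := hS.inv.isHermitian
  set Y := S⁻¹ * X * S⁻¹ with hY
  have hYpsd : Y.PosSemidef := by
    have : (S⁻¹ * X * (S⁻¹)ᴴ).PosDef :=
      posDef_conj hX (isUnit_nonsing_inv_iff.mpr hSu)
    rw [hSinvH] at this
    exact this.posSemidef
  have hcan : S * S⁻¹ = 1 := mul_nonsing_inv _ ((isUnit_iff_isUnit_det _).mp hSu)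
  have hcan' : S⁻¹ * S = 1 := nonsing_inv_mul _ ((isUnit_iff_isUnit_det _).mp hSu)
  have hAinv : A⁻¹ = S⁻¹ * S⁻¹ := by rw [← hSS, Matrix.mul_inv_rev]
  have hsq : Y ^ 2 = S⁻¹ * B * S⁻¹ := by
    rw [pow_two, hY, ← hXB, hAinv]
    calc S⁻¹ * X * S⁻¹ * (S⁻¹ * X * S⁻¹)
        = S⁻¹ * X * (S⁻¹ * S⁻¹) * X * S⁻¹ := by simp only [Matrix.mul_assoc]
      _ = S⁻¹ * (X * (S⁻¹ * S⁻¹) * X) * S⁻¹ := by simp only [Matrix.mul_assoc]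
  have hCpsd : (S⁻¹ * B * S⁻¹).PosSemidef := (cross_posDef hA _hB).posSemidef
  have hYT : Y = CFC.sqrt (S⁻¹ * B * S⁻¹) :=
    (CFC.sqrt_unique (by rw [← pow_two]; exact hsq) (Matrix.nonneg_iff_posSemidef.mpr hYpsd)).symm
  have hmsq : msqrt (S⁻¹ * B * S⁻¹) = CFC.sqrt (S⁻¹ * B * S⁻¹) := msqrt_eq hCpsd
  have : gmean A B = S * Y * S := by
    rw [gmean, ← hSdef, hmsq, ← hYT]
  rw [this, hY]
  calc X = (S * S⁻¹) * X * (S⁻¹ * S) := by rw [hcan, hcan', one_mul, mul_one]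
    _ = S * (S⁻¹ * X * S⁻¹) * S := by simp only [Matrix.mul_assoc]

end GmeanAux

/-- **Transformation property of the geometric mean.**  For all symmetric positive
definite matrices `A`, `B` and every invertible real matrix `M`,
`M (A # B) Mᵀ = (M A Mᵀ) # (M B Mᵀ)`. -/
theorem statement14 (n : ℕ) (A B M : Matrix (Fin n) (Fin n) ℝ)
    (hA : A.PosDef) (hB : B.PosDef) (hM : IsUnit M) :
    M * gmean A B * Mᵀ = gmean (M * A * Mᵀ) (M * B * Mᵀ) := by
  have hA' : (M * A * Mᵀ).PosDef := GmeanAux.posDef_conj' hA hM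
  have hB' : (M * B * Mᵀ).PosDef := GmeanAux.posDef_conj' hB hM
  have hG : (gmean A B).PosDef := GmeanAux.gmean_posDef hA hB
  have hX : (M * gmean A B * Mᵀ).PosDef := GmeanAux.posDef_conj' hG hM
  have hMd : IsUnit M.det := (isUnit_iff_isUnit_det _).mp hM
  have hMT : IsUnit (Mᵀ) := by simpa [isUnit_iff_isUnit_det, det_transpose] using hM
  have hMTd : IsUnit (Mᵀ).det := (isUnit_iff_isUnit_det _).mp hMT
  refine (GmeanAux.gmean_unique hA' hB' hX ?_).symm ▸ rfl
  have hAinv : (M * A * Mᵀ)⁻¹ = (Mᵀ)⁻¹ * A⁻¹ * M⁻¹ := by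
    rw [Matrix.mul_inv_rev, Matrix.mul_inv_rev]; simp only [Matrix.mul_assoc]
  have hc1 : Mᵀ * (Mᵀ)⁻¹ = 1 := mul_nonsing_inv _ hMTd
  have hc2 : M⁻¹ * M = 1 := nonsing_inv_mul _ hMd
  calc M * gmean A B * Mᵀ * (M * A * Mᵀ)⁻¹ * (M * gmean A B * Mᵀ)
      = M * gmean A B * (Mᵀ * (Mᵀ)⁻¹) * A⁻¹ * (M⁻¹ * M) * gmean A B * Mᵀ := by
        rw [hAinv]; simp only [Matrix.mul_assoc]
    _ = M * (gmean A B * A⁻¹ * gmean A B) * Mᵀ := by rw [hc1, hc2, mul_one, mul_one]; simp only [Matrix.mul_assoc]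
    _ = M * B * Mᵀ := by rw [GmeanAux.gmean_solves hA hB]
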